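/- arXiv:2407.07880 — 3 statements merged into one kernel-verified Lean document; each statement's English description precedes it below -/
import Mathlib

section
/- Let Ω be a finite set, ρ a strictly positive probability mass function on Ω, r: Ω → ℝ, and β > 0. Define L*(ω) = exp(r(ω)/β) / Z where Z = ∑_ω ρ(ω)·exp(r(ω)/β). Then the function π(ω) = ρ(ω)·L*(ω) is a probability mass function on Ω, and for every ω, r(ω) = β·log(π(ω)/ρ(ω)) + β·log(Z). -/
open Real Finset

/-- With `L*(ω) = exp(r(ω)/β)/Z`, `Z = ∑ ρ(ω)·exp(r(ω)/β)`, the function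
`π(ω) = ρ(ω)·L*(ω)` is a probability mass function, and
`r(ω) = β·log(π(ω)/ρ(ω)) + β·log Z` for every `ω`. -/
theorem optimal_policy_reward_correspondence {Ω : Type*} [Fintype Ω] [Nonempty Ω]
    (ρ : Ω → ℝ) (hρ : ∀ ω, 0 < ρ ω) (hsum : ∑ ω, ρ ω = 1)
    (r : Ω → ℝ) (β : ℝ) (hβ : 0 < β) :
    let Z : ℝ := ∑ ω, ρ ω * Real.exp (r ω / β)
    let Lstar : Ω → ℝ := fun ω => Real.exp (r ω / β) / Z
    let p : Ω → ℝ := fun ω => ρ ω * Lstar ω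
    ((∀ ω, 0 ≤ p ω) ∧ ∑ ω, p ω = 1) ∧
      ∀ ω, r ω = β * Real.log (p ω / ρ ω) + β * Real.log Z := by
  intro Z Lstar p
  have hZ : 0 < Z := Finset.sum_pos (fun ω _ => mul_pos (hρ ω) (Real.exp_pos _))
    Finset.univ_nonempty
  constructor
  · constructor
    · intro ω
      exact mul_nonneg (hρ ω).le (div_nonneg (Real.exp_pos _).le hZ.le)
    · have : ∑ ω, p ω = (∑ ω, ρ ω * Real.exp (r ω / β)) / Z := by
        rw [Finset.sum_div]
        exact Finset.sum_congr rfl fun ω _ => (mul_div_assoc _ _ _).symm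
      rw [this]
      exact div_self hZ.ne'
  · intro ω
    have hp : p ω / ρ ω = Real.exp (r ω / β) / Z := by
      simp only [p, Lstar]
      rw [mul_comm, mul_div_assoc]; rw [div_self (hρ ω).ne', mul_one]
    rw [hp, Real.log_div (Real.exp_pos _).ne' hZ.ne', Real.log_exp]
    field_simp
    ring
end

section
/- Let h₁, …, h_N be real numbers each lying in [a, b] with a ≤ b, and let β' > 0. Define weights w_i = exp(h_i/β') / ((1/N)·∑_{j=1}^N exp(h_j/β')). Then for every i, 0 < w_i ≤ N·exp((b−a)/β') / (N − 1 + exp((b−a)/β')). -/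
open Real Finset

/-- Bounds on the exponential-tilting weights
`w_i = exp(h_i/β') / ((1/N)·∑_j exp(h_j/β'))` for `h_i ∈ [a,b]`. -/
theorem drdpo_weight_bounds {N : ℕ} (hN : 1 ≤ N)
    (h : Fin N → ℝ) (a b : ℝ) (hab : a ≤ b)
    (hh : ∀ i, h i ∈ Set.Icc a b) (β' : ℝ) (hβ' : 0 < β') :
    let w : Fin N → ℝ := fun i =>
      Real.exp (h i / β') / ((1 / (N : ℝ)) * ∑ j, Real.exp (h j / β'))
    ∀ i, 0 < w i ∧
      w i ≤ (N : ℝ) * Real.exp ((b - a) / β') /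
        ((N : ℝ) - 1 + Real.exp ((b - a) / β')) := by
  intro w i
  have hNpos : (0:ℝ) < N := by exact_mod_cast hN
  have hSpos : 0 < ∑ j, Real.exp (h j / β') :=
    Finset.sum_pos (fun j _ => Real.exp_pos _) ⟨i, Finset.mem_univ i⟩
  have hdenom : 0 < (1/(N:ℝ)) * ∑ j, Real.exp (h j / β') := by positivity
  have hE1 : (1:ℝ) ≤ Real.exp ((b-a)/β') := by
    apply Real.one_le_exp
    have : 0 ≤ b - a := by linarith
    positivity
  have hN1 : (0:ℝ) ≤ (N:ℝ) - 1 := by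
    have : (1:ℝ) ≤ N := by exact_mod_cast hN
    linarith
  have hD : 0 < (N:ℝ) - 1 + Real.exp ((b-a)/β') := by
    linarith [Real.exp_pos ((b-a)/β')]
  refine ⟨div_pos (Real.exp_pos _) hdenom, ?_⟩
  show Real.exp (h i / β') / ((1 / (N : ℝ)) * ∑ j, Real.exp (h j / β')) ≤ _
  rw [div_le_div_iff₀ hdenom hD]
  have hsplit : ∑ j, Real.exp (h j / β')
      = Real.exp (h i / β') + ∑ j ∈ Finset.univ.erase i, Real.exp (h j / β') :=
    (Finset.add_sum_erase _ _ (Finset.mem_univ i)).symm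
  have hterm : ∀ j ∈ Finset.univ.erase i,
      Real.exp (h i / β') ≤ Real.exp ((b-a)/β') * Real.exp (h j / β') := by
    intro j _
    rw [← Real.exp_add]
    apply Real.exp_le_exp.mpr
    have h1 := (hh i).2
    have h2 := (hh j).1
    rw [← add_div, div_le_div_iff₀ hβ' hβ']
    nlinarith
  have hcard : ((Finset.univ.erase i).card : ℝ) = (N:ℝ) - 1 := by
    rw [Finset.card_erase_of_mem (Finset.mem_univ i)]
    simp
    exact_mod_cast Nat.cast_sub (R := ℝ) hN
  have hsum_lb : ((N:ℝ) - 1) * Real.exp (h i / β')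
      ≤ Real.exp ((b-a)/β') * ∑ j ∈ Finset.univ.erase i, Real.exp (h j / β') := by
    rw [Finset.mul_sum]
    calc ((N:ℝ) - 1) * Real.exp (h i / β')
        = ∑ _j ∈ Finset.univ.erase i, Real.exp (h i / β') := by
          rw [Finset.sum_const, nsmul_eq_mul, hcard]
      _ ≤ _ := Finset.sum_le_sum hterm
  have key : Real.exp (h i / β') * ((N:ℝ) - 1 + Real.exp ((b-a)/β'))
      ≤ Real.exp ((b-a)/β') * ∑ j, Real.exp (h j / β') := by
    rw [hsplit, mul_add]
    nlinarith
  calc Real.exp (h i / β') * ((N:ℝ) - 1 + Real.exp ((b-a)/β'))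
      ≤ Real.exp ((b-a)/β') * ∑ j, Real.exp (h j / β') := key
    _ = (N:ℝ) * Real.exp ((b-a)/β') * ((1/(N:ℝ)) * ∑ j, Real.exp (h j / β')) := by
        field_simp
end

section
/- Let h₁, …, h_N ∈ [a, b] with 0 ≤ a ≤ b, and β' > 0. Define f(h₁, …, h_N) = (1/N)·∑_{i=1}^N w_i·h_i where w_i = exp(h_i/β') / ((1/N)·∑_j exp(h_j/β')). Then changing a single coordinate h_k to another value h'_k ∈ [a, b] changes f by at most 2·b·exp((b−a)/β') / (N − 1 + exp((b−a)/β')). -/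
open Real Finset

set_option maxHeartbeats 1000000 in
/-- Bounded-differences property of the weighted empirical Dr. DPO loss
`f(h) = (1/N)·∑ᵢ wᵢ·hᵢ` with `wᵢ = exp(hᵢ/β') / ((1/N)·∑ⱼ exp(hⱼ/β'))`:
changing one coordinate within `[a,b]` changes `f` by at most
`2·b·exp((b−a)/β') / (N − 1 + exp((b−a)/β'))`. -/
theorem drdpo_bounded_differences {N : ℕ} (hN : 1 ≤ N)
    (a b : ℝ) (ha : 0 ≤ a) (hab : a ≤ b) (β' : ℝ) (hβ' : 0 < β') :
    let f : (Fin N → ℝ) → ℝ := fun h =>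
      (1 / (N : ℝ)) * ∑ i,
        (Real.exp (h i / β') / ((1 / (N : ℝ)) * ∑ j, Real.exp (h j / β'))) * h i
    ∀ (h : Fin N → ℝ), (∀ i, h i ∈ Set.Icc a b) →
      ∀ (k : Fin N) (h'k : ℝ), h'k ∈ Set.Icc a b →
        |f h - f (Function.update h k h'k)| ≤
          2 * b * Real.exp ((b - a) / β') /
            ((N : ℝ) - 1 + Real.exp ((b - a) / β')) := by
  intro f h hmem k h'k h'mem
  have hb : 0 ≤ b := le_trans ha hab
  have hNpos : (0 : ℝ) < N := by exact_mod_cast hN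
  have hN1 : (1 : ℝ) ≤ (N : ℝ) := by exact_mod_cast hN
  haveI : Nonempty (Fin N) := Fin.pos_iff_nonempty.mp (by omega)
  have key : ∀ g : Fin N → ℝ, f g =
      (∑ i, Real.exp (g i / β') * g i) / (∑ j, Real.exp (g j / β')) := by
    intro g
    have hSig : 0 < ∑ j, Real.exp (g j / β') :=
      Finset.sum_pos (fun j _ => Real.exp_pos _) Finset.univ_nonempty
    simp only [f, div_mul_eq_mul_div, ← Finset.sum_div]
    field_simp
  rw [key, key]
  set h' := Function.update h k h'k with hh'
  set u := Real.exp (h k / β') with hu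
  set v := Real.exp (h'k / β') with hv
  set S := ∑ i ∈ Finset.univ.erase k, Real.exp (h i / β') with hS
  set T := ∑ i ∈ Finset.univ.erase k, Real.exp (h i / β') * h i with hT
  have hsum1 : (∑ i, Real.exp (h i / β')) = S + u := by
    rw [hS, ← Finset.sum_erase_add Finset.univ _ (Finset.mem_univ k)]
  have hsum2 : (∑ i, Real.exp (h i / β') * h i) = T + u * h k := by
    rw [hT, ← Finset.sum_erase_add Finset.univ _ (Finset.mem_univ k)]
  have hfix : ∀ i ∈ Finset.univ.erase k, h' i = h i := by
    intro i hi
    exact Function.update_of_ne (Finset.ne_of_mem_erase hi) _ _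
  have hsum1' : (∑ i, Real.exp (h' i / β')) = S + v := by
    rw [← Finset.sum_erase_add Finset.univ _ (Finset.mem_univ k)]
    congr 1
    · exact Finset.sum_congr rfl (fun i hi => by rw [hfix i hi])
    · rw [hh', Function.update_self]
  have hsum2' : (∑ i, Real.exp (h' i / β') * h' i) = T + v * h'k := by
    rw [← Finset.sum_erase_add Finset.univ _ (Finset.mem_univ k)]
    congr 1
    · exact Finset.sum_congr rfl (fun i hi => by rw [hfix i hi])
    · rw [hh', Function.update_self]
  rw [hsum1, hsum2, hsum1', hsum2']
  have hS0 : 0 ≤ S := Finset.sum_nonneg (fun i _ => (Real.exp_pos _).le)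
  have hu0 : 0 < u := Real.exp_pos _
  have hv0 : 0 < v := Real.exp_pos _
  have hea : (0:ℝ) < Real.exp (a / β') := Real.exp_pos _
  have heb : (0:ℝ) < Real.exp (b / β') := Real.exp_pos _
  -- bounds on u, v
  have hub : u ≤ Real.exp (b / β') :=
    Real.exp_le_exp.mpr (div_le_div_of_nonneg_right (hmem k).2 hβ'.le)
  have hvb : v ≤ Real.exp (b / β') :=
    Real.exp_le_exp.mpr (div_le_div_of_nonneg_right h'mem.2 hβ'.le)
  -- S lower bound
  have hScard : (Finset.univ.erase k).card = N - 1 := by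
    rw [Finset.card_erase_of_mem (Finset.mem_univ k), Finset.card_univ, Fintype.card_fin]
  have hSlb : ((N : ℝ) - 1) * Real.exp (a / β') ≤ S := by
    have := Finset.card_nsmul_le_sum (Finset.univ.erase k)
      (fun i => Real.exp (h i / β')) (Real.exp (a / β'))
      (fun i _ => Real.exp_le_exp.mpr (div_le_div_of_nonneg_right (hmem i).1 hβ'.le))
    rw [hScard, nsmul_eq_mul] at this
    have hcast : ((N - 1 : ℕ) : ℝ) = (N : ℝ) - 1 := by
      rw [Nat.cast_sub hN]; norm_num
    rw [hcast] at this
    exact this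
  clear_value u v S T
  -- the W bound
  set W := Real.exp ((b - a) / β') / ((N : ℝ) - 1 + Real.exp ((b - a) / β')) with hW
  have hc : Real.exp ((b - a) / β') = Real.exp (b / β') / Real.exp (a / β') := by
    rw [← Real.exp_sub, ← sub_div]
  have hWden : (0 : ℝ) < (N : ℝ) - 1 + Real.exp ((b - a) / β') := by
    have := Real.exp_pos ((b - a) / β')
    linarith
  have hWdenalt : (0:ℝ) < ((N : ℝ) - 1) * Real.exp (a / β') + Real.exp (b / β') := by
    have h0 : (0:ℝ) ≤ (N:ℝ) - 1 := by linarith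
    positivity
  have hWalt : W = Real.exp (b / β') / (((N : ℝ) - 1) * Real.exp (a / β') + Real.exp (b / β')) := by
    rw [hW, hc, div_div]
    congr 1
    field_simp
  have hwW : ∀ t : ℝ, 0 < t → t ≤ Real.exp (b / β') → t / (S + t) ≤ W := by
    intro t ht htb
    rw [hWalt, div_le_div_iff₀ (by linarith) hWdenalt]
    have h1 : t * (((N : ℝ) - 1) * Real.exp (a / β')) ≤ Real.exp (b / β') * S := by
      calc t * (((N : ℝ) - 1) * Real.exp (a / β')) ≤ Real.exp (b / β') * (((N : ℝ) - 1) * Real.exp (a / β')) := by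
            exact mul_le_mul_of_nonneg_right htb (mul_nonneg (by linarith) hea.le)
        _ ≤ Real.exp (b / β') * S := by
            apply mul_le_mul_of_nonneg_left hSlb heb.le
    nlinarith
  have hW0 : 0 ≤ W := by
    rw [hW]; positivity
  clear_value W
  -- case N = 1
  rcases Nat.lt_or_ge N 2 with h2 | h2
  · -- N = 1, erase k is empty
    have hNeq : N = 1 := by omega
    have hSe : S = 0 := by
      rw [hS]
      apply Finset.sum_eq_zero
      intro i hi
      exact absurd (Finset.mem_erase.mp hi).1 (by subst hNeq; exact not_not.mpr (Subsingleton.elim i k))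
    have hTe : T = 0 := by
      rw [hT]
      apply Finset.sum_eq_zero
      intro i hi
      exact absurd (Finset.mem_erase.mp hi).1 (by subst hNeq; exact not_not.mpr (Subsingleton.elim i k))
    rw [hSe, hTe]
    have e1 : (0 + u * h k) / (0 + u) = h k := by field_simp; ring
    have e2 : (0 + v * h'k) / (0 + v) = h'k := by field_simp; ring
    rw [e1, e2]
    have hRHS : 2 * b * Real.exp ((b - a) / β') / ((N : ℝ) - 1 + Real.exp ((b - a) / β')) = 2 * b := by
      have hden : ((N : ℝ) - 1 + Real.exp ((b - a) / β')) = Real.exp ((b - a) / β') := by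
        rw [hNeq]; norm_num
      rw [hden, mul_div_assoc, div_self (Real.exp_pos _).ne', mul_one]
    rw [hRHS]
    rw [abs_le]
    have h1 := (hmem k).1; have h2 := (hmem k).2
    have h3 := h'mem.1; have h4 := h'mem.2
    constructor <;> linarith
  · -- N ≥ 2 : S > 0
    have hSpos : 0 < S := by
      rw [hS]
      apply Finset.sum_pos (fun i _ => Real.exp_pos _)
      rw [← Finset.card_pos, hScard]
      omega
    set m := T / S with hm
    have hmlb : a ≤ m := by
      rw [hm, le_div_iff₀ hSpos]
      rw [hT, hS, Finset.mul_sum]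
      apply Finset.sum_le_sum
      intro i hi
      rw [mul_comm]
      exact mul_le_mul_of_nonneg_left (hmem i).1 (Real.exp_pos _).le
    have hmub : m ≤ b := by
      rw [hm, div_le_iff₀ hSpos]
      rw [hT, hS, Finset.mul_sum]
      apply Finset.sum_le_sum
      intro i hi
      rw [mul_comm b]
      exact mul_le_mul_of_nonneg_left (hmem i).2 (Real.exp_pos _).le
    have hid : ∀ t y : ℝ, 0 < t → (T + t * y) / (S + t) = m + (t / (S + t)) * (y - m) := by
      intro t y ht
      rw [hm]
      field_simp
      ring
    rw [hid u (h k) hu0, hid v h'k hv0]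
    have hsplit : m + u / (S + u) * (h k - m) - (m + v / (S + v) * (h'k - m))
        = u / (S + u) * (h k - m) - v / (S + v) * (h'k - m) := by ring
    rw [hsplit]
    have hbnd : ∀ t y : ℝ, 0 < t → t ≤ Real.exp (b / β') → a ≤ y → y ≤ b →
        |t / (S + t) * (y - m)| ≤ W * b := by
      intro t y ht htb hy1 hy2
      rw [abs_mul]
      apply mul_le_mul
      · rw [abs_of_nonneg (div_nonneg ht.le (by linarith))]
        exact hwW t ht htb
      · rw [abs_le]; constructor <;> linarith
      · exact abs_nonneg _
      · exact hW0
    calc |u / (S + u) * (h k - m) - v / (S + v) * (h'k - m)|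
        ≤ |u / (S + u) * (h k - m)| + |v / (S + v) * (h'k - m)| := abs_sub _ _
      _ ≤ W * b + W * b := add_le_add (hbnd u (h k) hu0 hub (hmem k).1 (hmem k).2)
            (hbnd v h'k hv0 hvb h'mem.1 h'mem.2)
      _ = 2 * b * Real.exp ((b - a) / β') / ((N : ℝ) - 1 + Real.exp ((b - a) / β')) := by
          rw [hW]; ring
end
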